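/- Assume in addition that ξ×H ≠ 0 (so (H·ξ)² − |H|²|ξ|² ≠ 0). Then π₁(ξ) = Id₃ + ((H·ξ)² − |H|²|ξ|²)⁻¹·w²(ξ) is a symmetric idempotent 3×3 matrix of trace 1 (π₁ᵀ = π₁, π₁² = π₁, tr π₁ = 1); indeed π₁(ξ) is the orthogonal projection of ℝ³ onto the line spanned by ξ×H. -/
import Mathlib


open Matrix

noncomputable section

/-- Euclidean dot product on `ℝ³`. -/
def dot3 (a b : Fin 3 → ℝ) : ℝ := a 0 * b 0 + a 1 * b 1 + a 2 * b 2

/-- Cross product on `ℝ³`. -/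
def cross3 (a b : Fin 3 → ℝ) : Fin 3 → ℝ :=
  ![a 1 * b 2 - a 2 * b 1, a 2 * b 0 - a 0 * b 2, a 0 * b 1 - a 1 * b 0]

/-- `w²(ξ) = |H|²·(ξ⊗ξ) + |ξ|²·(H⊗H) − (H·ξ)·(H⊗ξ + ξ⊗H)`. -/
def w2 (H ξ : Fin 3 → ℝ) : Matrix (Fin 3) (Fin 3) ℝ :=
  (dot3 H H) • vecMulVec ξ ξ + (dot3 ξ ξ) • vecMulVec H H
    - (dot3 H ξ) • (vecMulVec H ξ + vecMulVec ξ H)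

/-- `π₁(ξ) = Id₃ + ((H·ξ)² − |H|²|ξ|²)⁻¹·w²(ξ)`. -/
def pi1 (H ξ : Fin 3 → ℝ) : Matrix (Fin 3) (Fin 3) ℝ :=
  (1 : Matrix (Fin 3) (Fin 3) ℝ)
    + ((dot3 H ξ) ^ 2 - dot3 H H * dot3 ξ ξ)⁻¹ • w2 H ξ

lemma cross_sq_pos (ξ H : Fin 3 → ℝ) (hcross : cross3 ξ H ≠ 0) :
    0 < dot3 (cross3 ξ H) (cross3 ξ H) := by
  set c := cross3 ξ H
  have h : 0 ≤ dot3 c c := by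
    simp only [dot3]
    nlinarith [mul_self_nonneg (c 0), mul_self_nonneg (c 1), mul_self_nonneg (c 2)]
  rcases h.lt_or_eq with h1 | h1
  · exact h1
  · exfalso
    apply hcross
    funext i
    have h0 : c 0 * c 0 + c 1 * c 1 + c 2 * c 2 = 0 := h1.symm
    have e0 : c 0 = 0 := by nlinarith [mul_self_nonneg (c 0), mul_self_nonneg (c 1), mul_self_nonneg (c 2)]
    have e1 : c 1 = 0 := by nlinarith [mul_self_nonneg (c 0), mul_self_nonneg (c 1), mul_self_nonneg (c 2)]
    have e2 : c 2 = 0 := by nlinarith [mul_self_nonneg (c 0), mul_self_nonneg (c 1), mul_self_nonneg (c 2)]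
    fin_cases i <;> simpa

lemma lagrange (ξ H : Fin 3 → ℝ) :
    dot3 (cross3 ξ H) (cross3 ξ H) = dot3 H H * dot3 ξ ξ - (dot3 H ξ) ^ 2 := by
  simp only [dot3, cross3, Matrix.cons_val_zero, Matrix.cons_val_one, Matrix.head_cons,
    Matrix.cons_val_two, Matrix.tail_cons]
  ring

lemma key_matrix (ξ H : Fin 3 → ℝ) :
    (dot3 (cross3 ξ H) (cross3 ξ H)) • (1 : Matrix (Fin 3) (Fin 3) ℝ) - w2 H ξ
      = vecMulVec (cross3 ξ H) (cross3 ξ H) := by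
  funext i j
  fin_cases i <;> fin_cases j <;>
    simp [w2, dot3, cross3, Matrix.one_apply, vecMulVec_apply] <;> ring

lemma dot3_eq (a b : Fin 3 → ℝ) : dot3 a b = a ⬝ᵥ b := by
  simp [dot3, dotProduct, Fin.sum_univ_three]

/-- If `ξ×H ≠ 0` (so `(H·ξ)² − |H|²|ξ|² ≠ 0`), then `π₁(ξ)` is a symmetric
idempotent of trace `1`; indeed it is the orthogonal projection of `ℝ³` onto the
line spanned by `ξ×H`. -/
theorem stmt5 (ρ γ p : ℝ) (H ξ : Fin 3 → ℝ)
    (hρ : 0 < ρ) (hγp : 0 < γ * p) (hcross : cross3 ξ H ≠ 0) :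
    ((dot3 H ξ) ^ 2 - dot3 H H * dot3 ξ ξ ≠ 0) ∧
    (pi1 H ξ)ᵀ = pi1 H ξ ∧
    pi1 H ξ * pi1 H ξ = pi1 H ξ ∧
    (pi1 H ξ).trace = 1 ∧
    pi1 H ξ = (dot3 (cross3 ξ H) (cross3 ξ H))⁻¹ •
        vecMulVec (cross3 ξ H) (cross3 ξ H) := by
  set c := cross3 ξ H with hc
  set C := dot3 c c with hCdef
  have hpos : 0 < C := cross_sq_pos ξ H hcross
  have hcc : C ≠ 0 := ne_of_gt hpos
  have hlag := lagrange ξ H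
  have hD : (dot3 H ξ) ^ 2 - dot3 H H * dot3 ξ ξ = -C := by
    rw [hCdef, hc, hlag]; ring
  have hDne : (dot3 H ξ) ^ 2 - dot3 H H * dot3 ξ ξ ≠ 0 := by
    rw [hD]; simpa using hcc
  have hproj : pi1 H ξ = C⁻¹ • vecMulVec c c := by
    rw [← key_matrix ξ H, ← hc, ← hCdef]
    rw [pi1, hD, smul_sub, smul_smul, inv_mul_cancel₀ hcc, one_smul]
    rw [inv_neg, neg_smul]
    abel
  refine ⟨hDne, ?_, ?_, ?_, hproj⟩
  · rw [hproj, Matrix.transpose_smul]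
    congr 1
    funext i j
    simp [vecMulVec_apply, Matrix.transpose_apply, mul_comm]
  · rw [hproj, Matrix.smul_mul, Matrix.mul_smul, smul_smul]
    have : vecMulVec c c * vecMulVec c c = C • vecMulVec c c := by
      funext i j
      simp only [Matrix.mul_apply, vecMulVec_apply, Matrix.smul_apply, smul_eq_mul,
        Fin.sum_univ_three, hCdef, dot3]
      ring
    rw [this, smul_smul]
    congr 1
    field_simp
  · rw [hproj, Matrix.trace_smul]
    have : (vecMulVec c c).trace = C := by
      simp only [Matrix.trace, Matrix.diag, vecMulVec_apply, Fin.sum_univ_three, hCdef, dot3]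
    rw [this, smul_eq_mul, inv_mul_cancel₀ hcc]
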